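/- arXiv:1406.1758 — 3 statements merged into one kernel-verified Lean document; each statement's English description precedes it below -/
import Mathlib

section
/- If S₁ and S₂ are non-isomorphic trees, each with at least 3 vertices, and n₀ = max(|S₁|, |S₂|), then there exists a decorated tree τ such that E[D_τ(T_{n₀}^{(S₁)})] ≠ E[D_τ(T_{n₀}^{(S₂)})]. -/
open Finset

noncomputable section

namespace LPAM

attribute [local instance] Classical.propDecidable

/-- The tree obtained from `G` by attaching a new vertex (the last element of `Fin (n+1)`)
to the vertex `v` of `G`. -/
def attach {n : ℕ} (G : SimpleGraph (Fin n)) (v : Fin n) : SimpleGraph (Fin (n + 1)) :=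
  SimpleGraph.fromRel fun a b =>
    (∃ a' b' : Fin n, a = a'.castSucc ∧ b = b'.castSucc ∧ G.Adj a' b') ∨
    (a = Fin.last n ∧ b = v.castSucc)

/-- The degree of a vertex. -/
def deg {n : ℕ} (G : SimpleGraph (Fin n)) (v : Fin n) : ℕ := (G.neighborSet v).ncard

/-- The law of the linear preferential attachment tree after `k` steps started from the
seed `S`: at each step, a new vertex is joined by an edge to a random vertex of the current
tree chosen with probability proportional to its degree. -/
def law {n₀ : ℕ} (S : SimpleGraph (Fin n₀)) : (k : ℕ) → SimpleGraph (Fin (n₀ + k)) → ℝ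
  | 0, G => if G = S then 1 else 0
  | (k + 1), G =>
      ∑ H : SimpleGraph (Fin (n₀ + k)), ∑ v : Fin (n₀ + k),
        law S k H * ((deg H v : ℝ) / (2 * (n₀ + k : ℕ) - 2)) *
          (if attach H v = G then 1 else 0)

/-- The law of the preferential attachment tree `T_n^{(S)}` with seed `S`, as a function on
graphs on `Fin n` (zero if `n < |S|`). -/
def lawAt {n₀ : ℕ} (S : SimpleGraph (Fin n₀)) (n : ℕ) (G : SimpleGraph (Fin n)) : ℝ :=
  if h : n₀ ≤ n then
    law S (n - n₀) (cast (congrArg (fun m => SimpleGraph (Fin m)) (Nat.add_sub_cancel' h).symm) G)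
  else 0

/-- A decorated tree: a finite tree together with a positive integer label on each vertex. -/
structure DecTree where
  n : ℕ
  graph : SimpleGraph (Fin n)
  isTree : graph.IsTree
  label : Fin n → ℕ
  label_pos : ∀ u, 0 < label u

/-- The weight of a decorated tree: the sum of its labels. -/
def DecTree.weight (τ : DecTree) : ℕ := ∑ u, τ.label u

/-- The strict partial order `≺` on decorated trees. -/
def DecTree.lt (τ' τ : DecTree) : Prop :=
  (τ'.weight < τ.weight ∧ τ'.n ≤ τ.n) ∨ (τ'.weight = τ.weight ∧ τ'.n < τ.n)

/-- The partial order `⪯` associated with `≺`. -/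
def DecTree.le (τ' τ : DecTree) : Prop := DecTree.lt τ' τ ∨ τ' = τ

/-- The observable `D_τ(T) = ∑_φ ∏_{u ∈ τ} [deg_T φ(u)]_{ℓ(u)}`, the sum running over all
embeddings (injective graph homomorphisms) `φ : τ → T`. -/
def Dval (τ : DecTree) {m : ℕ} (T : SimpleGraph (Fin m)) : ℝ :=
  ∑ φ : Fin τ.n → Fin m,
    if Function.Injective φ ∧ ∀ a b, τ.graph.Adj a b → T.Adj (φ a) (φ b) then
      ∏ u, ((deg T (φ u)).descFactorial (τ.label u) : ℝ)
    else 0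

/-- The expectation `E[D_τ(T_n^{(S)})]`. -/
def expD {n₀ : ℕ} (S : SimpleGraph (Fin n₀)) (τ : DecTree) (n : ℕ) : ℝ :=
  ∑ G : SimpleGraph (Fin n), lawAt S n G * Dval τ G

/-- `a ≪ b` : there are `c > 0` and `γ ∈ ℝ` with `|a_n| ≤ c (log n)^γ |b_n|` for `n` large. -/
def Lsim (a b : ℕ → ℝ) : Prop :=
  ∃ c γ : ℝ, 0 < c ∧ ∀ᶠ n : ℕ in Filter.atTop, |a n| ≤ c * Real.log n ^ γ * |b n|

end LPAM

namespace LPAM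

attribute [local instance] Classical.propDecidable

variable {n : ℕ}

lemma deg_eq_degree (G : SimpleGraph (Fin n)) [DecidableRel G.Adj] (v : Fin n) :
    deg G v = G.degree v := by
  rw [deg, SimpleGraph.degree, SimpleGraph.neighborFinset, Set.ncard_eq_toFinset_card']

lemma sum_deg_tree (G : SimpleGraph (Fin n)) (h : G.IsTree) (hn : 1 ≤ n) :
    ∑ v, deg G v = 2 * n - 2 := by
  classical
  have h1 := SimpleGraph.sum_degrees_eq_twice_card_edges G
  have h2 := h.card_edgeFinset
  simp only [Fintype.card_fin] at h2
  have h3 : ∑ v, deg G v = ∑ v, G.degree v :=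
    Finset.sum_congr rfl fun v _ => deg_eq_degree G v
  omega

lemma deg_pos (G : SimpleGraph (Fin n)) (h : G.Connected) (hn : 2 ≤ n) (v : Fin n) :
    0 < deg G v := by
  have : Nontrivial (Fin n) := Fin.nontrivial_iff_two_le.mpr hn
  obtain ⟨u, hu⟩ := exists_ne v
  obtain ⟨w⟩ := h.preconnected v u
  rw [deg, Set.ncard_pos (Set.toFinite _)]
  cases w with
  | nil => exact absurd rfl hu.symm
  | cons h' p => exact ⟨_, h'⟩

lemma attach_adj (G : SimpleGraph (Fin n)) (v : Fin n) (a b : Fin (n+1)) :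
    (attach G v).Adj a b ↔
      (∃ a' b' : Fin n, a = a'.castSucc ∧ b = b'.castSucc ∧ G.Adj a' b') ∨
      (a = Fin.last n ∧ b = v.castSucc) ∨ (b = Fin.last n ∧ a = v.castSucc) := by
  rw [attach, SimpleGraph.fromRel_adj]
  constructor
  · rintro ⟨hne, (⟨a',b',rfl,rfl,h⟩|⟨rfl,rfl⟩)|(⟨a',b',rfl,rfl,h⟩|⟨rfl,rfl⟩)⟩
    · exact Or.inl ⟨a',b',rfl,rfl,h⟩
    · exact Or.inr (Or.inl ⟨rfl, rfl⟩)
    · exact Or.inl ⟨b',a',rfl,rfl,h.symm⟩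
    · exact Or.inr (Or.inr ⟨rfl, rfl⟩)
  · rintro (⟨a',b',rfl,rfl,h⟩|⟨rfl,rfl⟩|⟨rfl,rfl⟩)
    · exact ⟨by simpa using (Fin.castSucc_injective n).ne h.ne, Or.inl (Or.inl ⟨_,_,rfl,rfl,h⟩)⟩
    · exact ⟨(Fin.castSucc_lt_last v).ne', Or.inl (Or.inr ⟨rfl, rfl⟩)⟩
    · exact ⟨(Fin.castSucc_lt_last v).ne, Or.inr (Or.inr ⟨rfl, rfl⟩)⟩

lemma attach_adj_cc (G : SimpleGraph (Fin n)) (v : Fin n) (a b : Fin n) :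
    (attach G v).Adj a.castSucc b.castSucc ↔ G.Adj a b := by
  rw [attach_adj]
  constructor
  · rintro (⟨a',b',ha,hb,h⟩|⟨ha,_⟩|⟨hb,_⟩)
    · rw [Fin.castSucc_injective n ha, Fin.castSucc_injective n hb]; exact h
    · exact absurd ha (Fin.castSucc_lt_last a).ne
    · exact absurd hb (Fin.castSucc_lt_last b).ne
  · exact fun h => Or.inl ⟨a, b, rfl, rfl, h⟩

lemma attach_adj_cl (G : SimpleGraph (Fin n)) (v : Fin n) (a : Fin n) :
    (attach G v).Adj a.castSucc (Fin.last n) ↔ a = v := by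
  rw [attach_adj]
  constructor
  · rintro (⟨a',b',_,hb,_⟩|⟨ha,_⟩|⟨_,ha⟩)
    · exact absurd hb.symm (Fin.castSucc_lt_last b').ne
    · exact absurd ha (Fin.castSucc_lt_last a).ne
    · exact Fin.castSucc_injective n ha
  · rintro rfl; exact Or.inr (Or.inr ⟨rfl, rfl⟩)

lemma deg_attach_castSucc (G : SimpleGraph (Fin n)) (v w : Fin n) :
    deg (attach G v) w.castSucc = deg G w + (if w = v then 1 else 0) := by
  classical
  have hset : (attach G v).neighborSet w.castSucc =
      Fin.castSucc '' G.neighborSet w ∪ (if w = v then {Fin.last n} else ∅) := by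
    ext x
    induction x using Fin.lastCases with
    | last =>
      simp only [SimpleGraph.mem_neighborSet, attach_adj_cl, Set.mem_union, Set.mem_image]
      constructor
      · rintro rfl
        simp
      · rintro (⟨y, _, hy⟩ | hx)
        · exact absurd hy (Fin.castSucc_lt_last y).ne
        · by_cases h : w = v
          · exact h
          · rw [if_neg h] at hx
            exact absurd hx (Set.notMem_empty _)
    | cast y =>
      simp only [SimpleGraph.mem_neighborSet, attach_adj_cc, Set.mem_union, Set.mem_image]
      constructor
      · intro hy
        exact Or.inl ⟨y, hy, rfl⟩
      · rintro (⟨z, hz, hcz⟩ | hx)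
        · rwa [Fin.castSucc_injective n hcz] at hz
        · by_cases h : w = v
          · rw [if_pos h] at hx
            exact absurd (Set.mem_singleton_iff.mp hx) (Fin.castSucc_lt_last y).ne
          · rw [if_neg h] at hx
            exact absurd hx (Set.notMem_empty _)
  rw [deg, hset, Set.ncard_union_eq ?_ (Set.toFinite _) (Set.toFinite _),
    Set.ncard_image_of_injective _ (Fin.castSucc_injective n)]
  · rw [deg]; by_cases h : w = v <;> simp [h]
  · rw [Set.disjoint_left]
    rintro x ⟨y, _, rfl⟩ hx
    by_cases h : w = v <;> simp [h] at hx

lemma deg_attach_last (G : SimpleGraph (Fin n)) (v : Fin n) :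
    deg (attach G v) (Fin.last n) = 1 := by
  have hset : (attach G v).neighborSet (Fin.last n) = {v.castSucc} := by
    ext x
    induction x using Fin.lastCases with
    | last =>
      simp [SimpleGraph.mem_neighborSet, SimpleGraph.irrefl,
        (Fin.castSucc_lt_last v).ne']
    | cast y =>
      rw [SimpleGraph.mem_neighborSet, SimpleGraph.adj_comm, attach_adj_cl]
      simp [(Fin.castSucc_injective n).eq_iff]
  rw [deg, hset, Set.ncard_singleton]

lemma sum_deg_attach (G : SimpleGraph (Fin n)) (v : Fin n) :
    ∑ u, deg (attach G v) u = (∑ w, deg G w) + 2 := by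
  classical
  rw [Fin.sum_univ_castSucc]
  simp [deg_attach_castSucc, deg_attach_last, Finset.sum_add_distrib]

variable {m : ℕ}

/-- Maximum degree. -/
def maxDeg (G : SimpleGraph (Fin m)) : ℕ := Finset.univ.sup (deg G)

lemma deg_le_maxDeg (G : SimpleGraph (Fin m)) (v : Fin m) : deg G v ≤ maxDeg G :=
  Finset.le_sup (Finset.mem_univ v)

lemma exists_deg_eq_maxDeg (G : SimpleGraph (Fin m)) (hm : 1 ≤ m) :
    ∃ v, deg G v = maxDeg G := by
  obtain ⟨v, _, hv⟩ := Finset.exists_mem_eq_sup Finset.univ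
    (Finset.univ_nonempty_iff.mpr ⟨⟨0, hm⟩⟩) (deg G)
  exact ⟨v, hv.symm⟩

lemma two_le_maxDeg (G : SimpleGraph (Fin m)) (h : G.IsTree) (hm : 3 ≤ m) :
    2 ≤ maxDeg G := by
  by_contra hc
  push_neg at hc
  have hsum : ∑ v, deg G v = 2 * m - 2 := sum_deg_tree G h (by omega)
  have hle : ∑ v, deg G v ≤ ∑ _v : Fin m, 1 :=
    Finset.sum_le_sum fun v _ => by
      have := deg_le_maxDeg G v; omega
  simp only [Finset.sum_const, Finset.card_univ, Fintype.card_fin, smul_eq_mul, mul_one] at hle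
  omega

lemma exists_leaf (G : SimpleGraph (Fin m)) (h : G.IsTree) (hm : 3 ≤ m) :
    ∃ v, deg G v = 1 := by
  by_contra hc
  push_neg at hc
  have hpos : ∀ v, 2 ≤ deg G v := fun v => by
    have h1 := deg_pos G h.isConnected (by omega) v
    have h2 := hc v
    omega
  have hsum : ∑ v, deg G v = 2 * m - 2 := sum_deg_tree G h (by omega)
  have hle : ∑ _v : Fin m, 2 ≤ ∑ v, deg G v := Finset.sum_le_sum fun v _ => hpos v
  simp only [Finset.sum_const, Finset.card_univ, Fintype.card_fin, smul_eq_mul] at hle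
  omega

lemma law_term_nonneg (S : SimpleGraph (Fin m)) (k : ℕ) (H : SimpleGraph (Fin (m+k)))
    (v : Fin (m+k)) (hlaw : 0 ≤ law S k H) (G : SimpleGraph (Fin (m+k+1))) :
    0 ≤ law S k H * ((deg H v : ℝ) / (2 * (m + k : ℕ) - 2)) *
      (if attach H v = G then 1 else 0) := by
  have h1 : (1 : ℝ) ≤ (m + k : ℕ) := by exact_mod_cast v.pos
  refine mul_nonneg (mul_nonneg hlaw (div_nonneg (Nat.cast_nonneg _) (by linarith))) ?_
  split <;> norm_num

lemma law_nonneg (S : SimpleGraph (Fin m)) : ∀ (k) (H : SimpleGraph (Fin (m+k))), 0 ≤ law S k H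
  | 0, H => by rw [law]; split <;> norm_num
  | (k+1), G => by
    rw [law]
    exact Finset.sum_nonneg fun H _ => Finset.sum_nonneg fun v _ =>
      law_term_nonneg S k H v (law_nonneg S k H) G

lemma sum_law_succ (S : SimpleGraph (Fin m)) (k : ℕ) (F : SimpleGraph (Fin (m+k+1)) → ℝ) :
    ∑ G : SimpleGraph (Fin (m+k+1)), law S (k+1) G * F G =
    ∑ H : SimpleGraph (Fin (m+k)), ∑ v, law S k H *
      ((deg H v : ℝ) / (2 * (m + k : ℕ) - 2)) * F (attach H v) := by
  simp only [law, Finset.sum_mul]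
  rw [Finset.sum_comm]
  refine Finset.sum_congr rfl fun H _ => ?_
  rw [Finset.sum_comm]
  refine Finset.sum_congr rfl fun v _ => ?_
  simp [mul_ite, ite_mul, Finset.sum_ite_eq]

lemma deg_attach_le {j : ℕ} (H : SimpleGraph (Fin j)) (v : Fin j) (c : ℕ)
    (hd : ∀ w, deg H w ≤ c) (hc : 1 ≤ c) (u : Fin (j+1)) :
    deg (attach H v) u ≤ c + 1 := by
  induction u using Fin.lastCases with
  | last => rw [deg_attach_last]; omega
  | cast y =>
    rw [deg_attach_castSucc]
    have := hd y
    split <;> omega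

lemma deg_attach_pair {j : ℕ} (H : SimpleGraph (Fin j)) (v : Fin j) (c p : ℕ)
    (hd : ∀ w, deg H w ≤ c) (hp : ∀ u w, u ≠ w → deg H u + deg H w ≤ p)
    (hcp : c + 2 ≤ p + 1) (u w : Fin (j+1)) (huw : u ≠ w) :
    deg (attach H v) u + deg (attach H v) w ≤ p + 1 := by
  induction u using Fin.lastCases with
  | last =>
    induction w using Fin.lastCases with
    | last => exact absurd rfl huw
    | cast y =>
      rw [deg_attach_last, deg_attach_castSucc]
      have := hd y
      split <;> omega
  | cast y =>
    induction w using Fin.lastCases with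
    | last =>
      rw [deg_attach_last, deg_attach_castSucc]
      have := hd y
      split <;> omega
    | cast z =>
      have hyz : y ≠ z := fun hc' => huw (by rw [hc'])
      rw [deg_attach_castSucc, deg_attach_castSucc]
      have := hp y z hyz
      by_cases hy : y = v
      · have hz : z ≠ v := fun hc' => hyz (by rw [hy, hc'])
        rw [if_pos hy, if_neg hz]
        omega
      · rw [if_neg hy]
        split <;> omega

lemma law_support (S : SimpleGraph (Fin m)) (hS : S.IsTree) (hm : 3 ≤ m) :
    ∀ (k) (H : SimpleGraph (Fin (m+k))), law S k H ≠ 0 →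
      (∑ v, deg H v = 2 * (m + k) - 2) ∧ (∀ v, deg H v ≤ maxDeg S + k) ∧
      (∀ u v : Fin (m+k), u ≠ v → deg H u + deg H v ≤ 2 * maxDeg S + k)
  | 0, H, h => by
    have hH : H = S := by
      by_contra hc
      rw [law, if_neg hc] at h
      exact h rfl
    subst hH
    refine ⟨sum_deg_tree H hS (by omega), fun v => ?_, fun u v _ => ?_⟩
    · simpa using deg_le_maxDeg H v
    · have h1 := deg_le_maxDeg H u
      have h2 := deg_le_maxDeg H v
      omega
  | (k+1), G, h => by
    rw [law] at h
    obtain ⟨H, -, hH⟩ := Finset.exists_ne_zero_of_sum_ne_zero h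
    obtain ⟨v, -, hv⟩ := Finset.exists_ne_zero_of_sum_ne_zero hH
    have hG : attach H v = G := by
      by_contra hc
      rw [if_neg hc, mul_zero] at hv
      exact hv rfl
    have hlaw : law S k H ≠ 0 := fun hc => by simp [hc] at hv
    obtain ⟨h1, h2, h3⟩ := law_support S hS hm k H hlaw
    have hmax := two_le_maxDeg S hS hm
    subst hG
    refine ⟨?_, fun u => ?_, fun u w huw => ?_⟩
    · have e1 : ∑ u : Fin (m+k+1), deg (attach H v) u = 2*(m+k+1) - 2 := by
        rw [sum_deg_attach, h1]; omega
      exact e1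
    · exact deg_attach_le H v (maxDeg S + k) h2 (by omega) u
    · exact deg_attach_pair H v (maxDeg S + k) (2 * maxDeg S + k) h2 h3 (by omega) u w huw

lemma law_mass (S : SimpleGraph (Fin m)) (hS : S.IsTree) (hm : 3 ≤ m) :
    ∀ k, ∑ H : SimpleGraph (Fin (m+k)), law S k H = 1
  | 0 => by simp [law]
  | (k+1) => by
    have key : (∑ G : SimpleGraph (Fin (m+k+1)), law S (k+1) G) = 1 := by
      have hrw : (∑ G : SimpleGraph (Fin (m+k+1)), law S (k+1) G)
          = ∑ G : SimpleGraph (Fin (m+k+1)), law S (k+1) G * (fun _ => (1:ℝ)) G := by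
        simp
      rw [hrw, sum_law_succ]
      have hper : ∀ H : SimpleGraph (Fin (m+k)),
          (∑ v, law S k H * ((deg H v : ℝ) / (2 * (m + k : ℕ) - 2)) * (fun _ => (1:ℝ)) (attach H v))
            = law S k H := by
        intro H
        by_cases h : law S k H = 0
        · simp [h]
        · have hsum := (law_support S hS hm k H h).1
          simp only [mul_one]
          rw [← Finset.mul_sum, ← Finset.sum_div, ← Nat.cast_sum, hsum]
          have hc : ((2 * (m + k) - 2 : ℕ) : ℝ) = 2 * ((m + k : ℕ) : ℝ) - 2 := by
            have h2 : 2 ≤ 2 * (m + k) := by omega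
            push_cast [Nat.cast_sub h2]
            ring
          rw [hc, div_self ?_, mul_one]
          have h3 : (3 : ℝ) ≤ ((m + k : ℕ) : ℝ) := by exact_mod_cast (by omega : 3 ≤ m + k)
          linarith
      rw [Finset.sum_congr rfl fun H _ => hper H, law_mass S hS hm k]
    exact key

/-- Iterated attachment to (the image of) a fixed vertex. -/
def iter (S : SimpleGraph (Fin m)) (u : Fin m) : (k : ℕ) → SimpleGraph (Fin (m + k))
  | 0 => S
  | (k+1) => attach (iter S u k) (Fin.castLE (Nat.le_add_right m k) u)

lemma deg_iter (S : SimpleGraph (Fin m)) (u : Fin m) :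
    ∀ (k) (x : Fin (m + k)), deg (iter S u k) x =
      if h : (x : ℕ) < m then deg S ⟨x, h⟩ + (if (x : ℕ) = (u : ℕ) then k else 0) else 1
  | 0, x => by
    have hx : (x : ℕ) < m := x.isLt
    rw [iter, dif_pos hx]
    simp [Fin.eta]
  | (k+1), x => by
    rw [iter]
    induction x using Fin.lastCases with
    | last =>
      rw [deg_attach_last, dif_neg (by simp [Fin.val_last])]
    | cast y =>
      rw [deg_attach_castSucc, deg_iter S u k y]
      simp only [Fin.coe_castSucc]
      have he : (y = Fin.castLE (Nat.le_add_right m k) u) ↔ ((y : ℕ) = (u : ℕ)) := by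
        rw [Fin.ext_iff]; rfl
      by_cases h : (y : ℕ) < m
      · rw [dif_pos h, dif_pos h]
        by_cases h2 : (y : ℕ) = (u : ℕ)
        · rw [if_pos h2, if_pos (he.mpr h2), if_pos h2]
          omega
        · rw [if_neg h2, if_neg (fun hc => h2 (he.mp hc)), if_neg h2]
      · rw [dif_neg h, dif_neg h,
          if_neg (fun hc => h (by have h4 := he.mp hc; have h5 := u.isLt; omega))]

lemma deg_iter_self (S : SimpleGraph (Fin m)) (u : Fin m) (k : ℕ) :
    deg (iter S u k) (Fin.castLE (Nat.le_add_right m k) u) = deg S u + k := by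
  rw [deg_iter, dif_pos (by simpa using u.isLt)]
  simp [Fin.eta]

lemma law_iter_pos (S : SimpleGraph (Fin m)) (u : Fin m) (hm : 3 ≤ m)
    (hu : 0 < deg S u) : ∀ k, 0 < law S k (iter S u k)
  | 0 => by
    rw [law, if_pos (show iter S u 0 = S by rw [iter])]
    norm_num
  | (k+1) => by
    rw [law]
    refine Finset.sum_pos' (fun H _ => Finset.sum_nonneg fun v _ =>
      law_term_nonneg S k H v (law_nonneg S k H) _) ⟨iter S u k, Finset.mem_univ _, ?_⟩
    refine Finset.sum_pos' (fun v _ => law_term_nonneg S k _ v (law_nonneg S k _) _)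
      ⟨Fin.castLE (Nat.le_add_right m k) u, Finset.mem_univ _, ?_⟩
    rw [show iter S u (k+1) = attach (iter S u k) (Fin.castLE (Nat.le_add_right m k) u) by
      rw [iter]]
    rw [if_pos rfl, mul_one]
    have hdeg : deg (iter S u k) (Fin.castLE (Nat.le_add_right m k) u) = deg S u + k := by
      rw [deg_iter, dif_pos (by simpa using u.isLt)]
      simp [Fin.eta]
    refine mul_pos (law_iter_pos S u hm hu k) (div_pos ?_ ?_)
    · rw [hdeg]
      exact_mod_cast (by omega : 0 < deg S u + k)
    · have h3 : (3 : ℝ) ≤ ((m + k : ℕ) : ℝ) := by exact_mod_cast (by omega : 3 ≤ m + k)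
      linarith

lemma law_cast (S : SimpleGraph (Fin m)) {j j' : ℕ} (h : j = j')
    (e : SimpleGraph (Fin (m + j)) = SimpleGraph (Fin (m + j')))
    (G : SimpleGraph (Fin (m + j))) : law S j' (cast e G) = law S j G := by
  subst h
  rfl

lemma law_cast0 (S : SimpleGraph (Fin m)) {j : ℕ} (h : j = 0)
    (e : SimpleGraph (Fin m) = SimpleGraph (Fin (m + j)))
    (G : SimpleGraph (Fin m)) : law S j (cast e G) = if G = S then 1 else 0 := by
  subst h
  rw [law, show cast e G = G from cast_eq_iff_heq.mpr HEq.rfl]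

lemma expD_static (S : SimpleGraph (Fin m)) (τ : DecTree) : expD S τ m = Dval τ S := by
  rw [expD]
  have hper : ∀ G : SimpleGraph (Fin m), lawAt S m G = if G = S then 1 else 0 := by
    intro G
    rw [lawAt, dif_pos (le_refl m), law_cast0 S (by omega)]
  rw [Finset.sum_congr rfl fun G _ => by rw [hper G]]
  simp [ite_mul, Finset.sum_ite_eq']

lemma expD_evolve (S : SimpleGraph (Fin m)) (τ : DecTree) (k : ℕ) :
    expD S τ (m + k) = ∑ G : SimpleGraph (Fin (m + k)), law S k G * Dval τ G := by
  rw [expD]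
  refine Finset.sum_congr rfl fun G _ => ?_
  rw [lawAt, dif_pos (Nat.le_add_right m k), law_cast S (show k = m + k - m by omega)]

lemma bot_isTree_one : (⊥ : SimpleGraph (Fin 1)).IsTree := by
  constructor
  · constructor
    intro u v
    rw [Subsingleton.elim u v]
  · exact SimpleGraph.isAcyclic_bot

/-- The decorated tree consisting of a single vertex with label `ℓ`. -/
def ptTree (ℓ : ℕ) (hℓ : 0 < ℓ) : DecTree :=
  ⟨1, ⊥, bot_isTree_one, fun _ => ℓ, fun _ => hℓ⟩

lemma Dval_pt (ℓ : ℕ) (hℓ : 0 < ℓ) {M : ℕ} (T : SimpleGraph (Fin M)) :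
    Dval (ptTree ℓ hℓ) T = ∑ v, ((deg T v).descFactorial ℓ : ℝ) := by
  rw [Dval]
  refine Fintype.sum_equiv (Equiv.funUnique (Fin 1) (Fin M)) _ _ fun φ => ?_
  rw [if_pos ⟨Function.injective_of_subsingleton φ, fun a b h => (h : False).elim⟩]
  simp [ptTree]
  exact Fin.prod_univ_one (fun u => ((deg T (φ u)).descFactorial ℓ : ℝ))

lemma Dval_nonneg (τ : DecTree) {M : ℕ} (T : SimpleGraph (Fin M)) : 0 ≤ Dval τ T := by
  refine Finset.sum_nonneg fun φ _ => ?_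
  split
  · exact Finset.prod_nonneg fun u _ => Nat.cast_nonneg _
  · exact le_refl 0

lemma Dval_pt_zero (ℓ : ℕ) (hℓ : 0 < ℓ) {M : ℕ} (T : SimpleGraph (Fin M))
    (h : ∀ v, deg T v < ℓ) : Dval (ptTree ℓ hℓ) T = 0 := by
  rw [Dval_pt]
  refine Finset.sum_eq_zero fun v _ => ?_
  rw [Nat.descFactorial_eq_zero_iff_lt.mpr (h v), Nat.cast_zero]

lemma Dval_pt_pos (ℓ : ℕ) (hℓ : 0 < ℓ) {M : ℕ} (T : SimpleGraph (Fin M))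
    (h : ∃ v, ℓ ≤ deg T v) : 0 < Dval (ptTree ℓ hℓ) T := by
  obtain ⟨v, hv⟩ := h
  rw [Dval_pt]
  refine Finset.sum_pos' (fun u _ => Nat.cast_nonneg _) ⟨v, Finset.mem_univ v, ?_⟩
  have : (deg T v).descFactorial ℓ ≠ 0 := fun hc =>
    absurd (Nat.descFactorial_eq_zero_iff_lt.mp hc) (not_lt.mpr hv)
  exact_mod_cast Nat.pos_of_ne_zero this

lemma Dval_pt_le (ℓ : ℕ) (hℓ : 0 < ℓ) {M : ℕ} (T : SimpleGraph (Fin M))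
    (hall : ∀ v, deg T v ≤ ℓ) (hpair : ∀ u v, u ≠ v → deg T u + deg T v < 2 * ℓ) :
    Dval (ptTree ℓ hℓ) T ≤ (Nat.factorial ℓ : ℝ) := by
  classical
  rw [Dval_pt]
  set s := Finset.univ.filter (fun v => deg T v = ℓ) with hs
  have hcard : s.card ≤ 1 := by
    refine Finset.card_le_one.mpr fun a ha b hb => ?_
    by_contra hab
    have ha' := (Finset.mem_filter.mp ha).2
    have hb' := (Finset.mem_filter.mp hb).2
    have := hpair a b hab
    omega
  have h1 : ∑ v, ((deg T v).descFactorial ℓ : ℝ) = ∑ v ∈ s, ((deg T v).descFactorial ℓ : ℝ) := by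
    refine (Finset.sum_subset (Finset.subset_univ s) fun x _ hx => ?_).symm
    have : deg T x < ℓ := by
      have h2 := hall x
      have h3 : ¬ deg T x = ℓ := by
        intro hc
        exact hx (Finset.mem_filter.mpr ⟨Finset.mem_univ x, hc⟩)
      omega
    rw [Nat.descFactorial_eq_zero_iff_lt.mpr this, Nat.cast_zero]
  have h2 : ∑ v ∈ s, ((deg T v).descFactorial ℓ : ℝ) = s.card * (Nat.factorial ℓ : ℝ) := by
    rw [Finset.sum_congr rfl fun v hv => ?_, Finset.sum_const, nsmul_eq_mul]
    rw [(Finset.mem_filter.mp hv).2, Nat.descFactorial_self]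
  rw [h1, h2]
  have : (s.card : ℝ) ≤ 1 := by exact_mod_cast hcard
  nlinarith [Nat.cast_nonneg (α := ℝ) (Nat.factorial ℓ)]

lemma Dval_pt_ge (ℓ : ℕ) (hℓ : 0 < ℓ) {M : ℕ} (T : SimpleGraph (Fin M)) (v : Fin M)
    (hv : deg T v = ℓ) : (Nat.factorial ℓ : ℝ) ≤ Dval (ptTree ℓ hℓ) T := by
  rw [Dval_pt]
  have h1 := Finset.single_le_sum (f := fun u => ((deg T u).descFactorial ℓ : ℝ))
    (fun u _ => Nat.cast_nonneg _) (Finset.mem_univ v)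
  simp only [hv, Nat.descFactorial_self] at h1
  exact h1

lemma iso_of_injective_hom {M : ℕ} {G H : SimpleGraph (Fin M)} (hG : G.IsTree) (hH : H.IsTree)
    (φ : Fin M → Fin M) (hinj : Function.Injective φ)
    (hadj : ∀ a b, G.Adj a b → H.Adj (φ a) (φ b)) : Nonempty (G ≃g H) := by
  classical
  have hcard : G.edgeFinset.card + 1 = M := by simpa using hG.card_edgeFinset
  have hcard' : H.edgeFinset.card + 1 = M := by simpa using hH.card_edgeFinset
  have himg : G.edgeFinset.image (Sym2.map φ) ⊆ H.edgeFinset := by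
    intro e he
    obtain ⟨e', he', rfl⟩ := Finset.mem_image.mp he
    revert he'
    refine Sym2.ind (fun a b => ?_) e'
    intro hab
    rw [SimpleGraph.mem_edgeFinset, SimpleGraph.mem_edgeSet] at hab
    simpa [SimpleGraph.mem_edgeFinset, Sym2.map_pair_eq] using hadj a b hab
  have hcards : (G.edgeFinset.image (Sym2.map φ)).card = H.edgeFinset.card := by
    rw [Finset.card_image_of_injective _ (Sym2.map.injective hinj)]
    omega
  have heq : G.edgeFinset.image (Sym2.map φ) = H.edgeFinset :=
    Finset.eq_of_subset_of_card_le himg (le_of_eq hcards.symm)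
  have hback : ∀ a b, H.Adj (φ a) (φ b) → G.Adj a b := by
    intro a b hab
    have hmem : s(φ a, φ b) ∈ H.edgeFinset := by
      rwa [SimpleGraph.mem_edgeFinset, SimpleGraph.mem_edgeSet]
    rw [← heq] at hmem
    obtain ⟨e', he', hfe⟩ := Finset.mem_image.mp hmem
    revert he' hfe
    refine Sym2.ind (fun c d => ?_) e'
    intro hcd hfe
    rw [SimpleGraph.mem_edgeFinset, SimpleGraph.mem_edgeSet] at hcd
    rw [Sym2.map_pair_eq, Sym2.eq_iff] at hfe
    rcases hfe with ⟨h1, h2⟩ | ⟨h1, h2⟩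
    · rwa [hinj h1, hinj h2] at hcd
    · rw [hinj h1, hinj h2] at hcd
      exact hcd.symm
  have hbij : Function.Bijective φ := Finite.injective_iff_bijective.mp hinj
  exact ⟨⟨Equiv.ofBijective φ hbij, fun {a b} => ⟨hback a b, hadj a b⟩⟩⟩

lemma Dval_id_pos (τ : DecTree) (hconn : τ.graph.Connected) (hn : 2 ≤ τ.n)
    (hl : ∀ u, τ.label u = 1) : 0 < Dval τ τ.graph := by
  rw [Dval]
  refine Finset.sum_pos' (fun φ _ => ?_) ⟨id, Finset.mem_univ _, ?_⟩
  · split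
    · exact Finset.prod_nonneg fun u _ => Nat.cast_nonneg _
    · exact le_refl 0
  · rw [if_pos ⟨Function.injective_id, fun a b h => h⟩]
    refine Finset.prod_pos fun u _ => ?_
    rw [hl u, Nat.descFactorial_one]
    exact_mod_cast deg_pos τ.graph hconn hn (id u)

lemma key_lt {m' k : ℕ} (S : SimpleGraph (Fin (m' + k))) (S' : SimpleGraph (Fin m'))
    (hS : S.IsTree) (hS' : S'.IsTree) (hm' : 3 ≤ m') (hk : 1 ≤ k) :
    ∃ τ : DecTree, expD S τ (m' + k) ≠ expD S' τ (m' + k) := by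
  classical
  have hm : 3 ≤ m' + k := by omega
  set Δ := maxDeg S with hΔ
  set Δ' := maxDeg S' with hΔ'
  have hΔ2 : 2 ≤ Δ := two_le_maxDeg S hS hm
  have hΔ'2 : 2 ≤ Δ' := two_le_maxDeg S' hS' hm'
  obtain ⟨vS, hvS⟩ := exists_deg_eq_maxDeg S (by omega)
  obtain ⟨vS', hvS'⟩ := exists_deg_eq_maxDeg S' (by omega)
  rcases lt_trichotomy Δ (Δ' + k) with hc | hc | hc
  · -- Δ < Δ' + k : use point labelled Δ + 1
    refine ⟨ptTree (Δ + 1) (by omega), ?_⟩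
    rw [expD_static, expD_evolve]
    have hzero : Dval (ptTree (Δ + 1) (by omega)) S = 0 :=
      Dval_pt_zero _ _ S fun v => by have := deg_le_maxDeg S v; omega
    have hpos : 0 < ∑ G : SimpleGraph (Fin (m' + k)), law S' k G * Dval (ptTree (Δ + 1) (by omega)) G := by
      refine Finset.sum_pos' (fun G _ => mul_nonneg (law_nonneg S' k G) (Dval_nonneg _ G))
        ⟨iter S' vS' k, Finset.mem_univ _, ?_⟩
      refine mul_pos (law_iter_pos S' vS' hm' (by omega) k) (Dval_pt_pos _ _ _ ?_)
      refine ⟨Fin.castLE (Nat.le_add_right m' k) vS', ?_⟩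
      rw [deg_iter_self, hvS']
      omega
    rw [hzero]
    exact fun h => absurd h.symm (ne_of_gt hpos)
  · -- Δ = Δ' + k : use point labelled Δ
    refine ⟨ptTree Δ (by omega), ?_⟩
    rw [expD_static, expD_evolve]
    have hge : (Nat.factorial Δ : ℝ) ≤ Dval (ptTree Δ (by omega)) S :=
      Dval_pt_ge _ _ S vS hvS
    -- the tree obtained by attaching everything to a leaf
    obtain ⟨u₀, hu₀⟩ := exists_leaf S' hS' hm'
    set T₀ := iter S' u₀ k with hT₀
    have hT₀pos : 0 < law S' k T₀ := law_iter_pos S' u₀ hm' (by omega) k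
    have hT₀deg : ∀ x : Fin (m' + k), deg T₀ x < Δ := by
      intro x
      rw [hT₀, deg_iter]
      split
      · next h =>
        by_cases h2 : (x : ℕ) = (u₀ : ℕ)
        · rw [if_pos h2]
          have : deg S' ⟨(x : ℕ), h⟩ = 1 := by
            have : (⟨(x : ℕ), h⟩ : Fin m') = u₀ := Fin.ext h2
            rw [this]; exact hu₀
          omega
        · rw [if_neg h2]
          have := deg_le_maxDeg S' ⟨(x : ℕ), h⟩
          omega
      · omega
    have hT₀z : Dval (ptTree Δ (by omega)) T₀ = 0 := Dval_pt_zero _ _ T₀ hT₀deg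
    have hbound : ∀ G : SimpleGraph (Fin (m' + k)),
        law S' k G * Dval (ptTree Δ (by omega)) G ≤
        law S' k G * (Nat.factorial Δ : ℝ) - (if G = T₀ then law S' k G * (Nat.factorial Δ : ℝ) else 0) := by
      intro G
      by_cases hlz : law S' k G = 0
      · simp [hlz]
      · obtain ⟨-, h2, h3⟩ := law_support S' hS' hm' k G hlz
        by_cases hG : G = T₀
        · rw [if_pos hG, hG, hT₀z, mul_zero]
          rw [sub_self]
        · rw [if_neg hG, sub_zero]
          refine mul_le_mul_of_nonneg_left ?_ (law_nonneg S' k G)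
          refine Dval_pt_le _ _ G (fun v => by have := h2 v; omega)
            (fun u v huv => by have := h3 u v huv; omega)
    have hsum : ∑ G : SimpleGraph (Fin (m' + k)), law S' k G * Dval (ptTree Δ (by omega)) G ≤
        (Nat.factorial Δ : ℝ) - law S' k T₀ * (Nat.factorial Δ : ℝ) := by
      calc ∑ G : SimpleGraph (Fin (m' + k)), law S' k G * Dval (ptTree Δ (by omega)) G
          ≤ ∑ G : SimpleGraph (Fin (m' + k)), (law S' k G * (Nat.factorial Δ : ℝ) -
              (if G = T₀ then law S' k G * (Nat.factorial Δ : ℝ) else 0)) :=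
            Finset.sum_le_sum fun G _ => hbound G
        _ = (∑ G : SimpleGraph (Fin (m' + k)), law S' k G) * (Nat.factorial Δ : ℝ) -
              law S' k T₀ * (Nat.factorial Δ : ℝ) := by
            rw [Finset.sum_sub_distrib, ← Finset.sum_mul, Finset.sum_ite_eq', if_pos (Finset.mem_univ T₀)]
        _ = (Nat.factorial Δ : ℝ) - law S' k T₀ * (Nat.factorial Δ : ℝ) := by
            rw [law_mass S' hS' hm' k, one_mul]
    have hfac : (0 : ℝ) < (Nat.factorial Δ : ℝ) := by exact_mod_cast Nat.factorial_pos Δ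
    intro hEq
    rw [hEq] at hge
    nlinarith
  · -- Δ' + k < Δ : use point labelled Δ' + k + 1
    refine ⟨ptTree (Δ' + k + 1) (by omega), ?_⟩
    rw [expD_static, expD_evolve]
    have hpos : 0 < Dval (ptTree (Δ' + k + 1) (by omega)) S :=
      Dval_pt_pos _ _ S ⟨vS, by omega⟩
    have hzero : ∑ G : SimpleGraph (Fin (m' + k)), law S' k G * Dval (ptTree (Δ' + k + 1) (by omega)) G = 0 := by
      refine Finset.sum_eq_zero fun G _ => ?_
      by_cases hlz : law S' k G = 0
      · rw [hlz, zero_mul]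
      · obtain ⟨-, h2, -⟩ := law_support S' hS' hm' k G hlz
        rw [Dval_pt_zero _ _ G (fun v => by have := h2 v; omega), mul_zero]
    rw [hzero]
    exact ne_of_gt hpos

lemma Dval_noniso {M : ℕ} (G H : SimpleGraph (Fin M)) (hG : G.IsTree) (hH : H.IsTree)
    (hiso : ¬ Nonempty (G ≃g H)) (l : Fin M → ℕ) (lp : ∀ u, 0 < l u) :
    Dval ⟨M, G, hG, l, lp⟩ H = 0 := by
  rw [Dval]
  refine Finset.sum_eq_zero fun φ _ => ?_
  rw [if_neg]
  rintro ⟨hinj, hadj⟩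
  exact hiso (iso_of_injective_hom hG hH φ hinj hadj)

end LPAM

namespace LPAM

/-- If `S₁` and `S₂` are non-isomorphic trees, each with at least 3 vertices, and
`n₀ = max(|S₁|, |S₂|)`, then there exists a decorated tree `τ` such that
`E[D_τ(T_{n₀}^{(S₁)})] ≠ E[D_τ(T_{n₀}^{(S₂)})]`. -/
theorem exists_distinguishing_decorated_tree
    {m₁ m₂ : ℕ} (S₁ : SimpleGraph (Fin m₁)) (S₂ : SimpleGraph (Fin m₂))
    (h₁ : S₁.IsTree) (h₂ : S₂.IsTree) (hm₁ : 3 ≤ m₁) (hm₂ : 3 ≤ m₂)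
    (hiso : ¬ Nonempty (S₁ ≃g S₂)) :
    ∃ τ : DecTree, expD S₁ τ (max m₁ m₂) ≠ expD S₂ τ (max m₁ m₂) := by
  rcases lt_trichotomy m₁ m₂ with h | h | h
  · obtain ⟨k, rfl⟩ : ∃ k, m₂ = m₁ + k := ⟨m₂ - m₁, by omega⟩
    have hmax : max m₁ (m₁ + k) = m₁ + k := by omega
    rw [hmax]
    obtain ⟨τ, hτ⟩ := key_lt S₂ S₁ h₂ h₁ hm₁ (by omega)
    exact ⟨τ, hτ.symm⟩
  · subst h
    rw [max_self]
    refine ⟨⟨m₁, S₁, h₁, fun _ => 1, fun _ => one_pos⟩, ?_⟩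
    rw [expD_static, expD_static]
    have hpos := Dval_id_pos ⟨m₁, S₁, h₁, fun _ => 1, fun _ => one_pos⟩
      h₁.isConnected (show 2 ≤ m₁ by omega) (fun _ => rfl)
    rw [Dval_noniso S₁ S₂ h₁ h₂ hiso _ _]
    exact ne_of_gt hpos
  · obtain ⟨k, rfl⟩ : ∃ k, m₁ = m₂ + k := ⟨m₁ - m₂, by omega⟩
    have hmax : max (m₂ + k) m₂ = m₂ + k := by omega
    rw [hmax]
    exact key_lt S₁ S₂ h₁ h₂ hm₂ (by omega)

end LPAM
end
end

section
/- Let a > 0, C > 0, γ ≥ 0 be reals and n₀ ≥ 2 an integer, and let (x_n)_{n ≥ n₀} be a sequence of nonnegative reals satisfying x_{n+1} ≤ (1 + a/(2n−2)) · x_n + C · (log n)^γ · n^{a/2 − 1} for all n ≥ n₀. Then there exist constants c > 0 and γ' ∈ ℝ such that x_n ≤ c · (log n)^{γ'} · n^{a/2} for all n large enough. -/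
set_option maxHeartbeats 2000000 in
/-- Let `a > 0`, `C > 0`, `γ ≥ 0` be reals and `n₀ ≥ 2` an integer, and let `(x_n)_{n ≥ n₀}` be a
sequence of nonnegative reals satisfying
`x_{n+1} ≤ (1 + a/(2n−2)) · x_n + C · (log n)^γ · n^{a/2 − 1}` for all `n ≥ n₀`. Then there exist
constants `c > 0` and `γ' ∈ ℝ` such that `x_n ≤ c · (log n)^{γ'} · n^{a/2}` for all `n` large
enough. -/
theorem recursive_bound_growth (a C γ : ℝ) (ha : 0 < a) (hC : 0 < C) (hγ : 0 ≤ γ)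
    (n₀ : ℕ) (hn₀ : 2 ≤ n₀) (x : ℕ → ℝ)
    (hx0 : ∀ n, n₀ ≤ n → 0 ≤ x n)
    (hrec : ∀ n, n₀ ≤ n →
      x (n + 1) ≤ (1 + a / (2 * (n : ℝ) - 2)) * x n
        + C * Real.log n ^ γ * (n : ℝ) ^ (a / 2 - 1)) :
    ∃ c γ' : ℝ, 0 < c ∧
      ∀ᶠ n : ℕ in Filter.atTop, x n ≤ c * Real.log n ^ γ' * (n : ℝ) ^ (a / 2) := by
  -- eventually a * log t ≤ (t - 1)/2
  have hev : ∀ᶠ t : ℝ in Filter.atTop, a * Real.log t ≤ (t - 1) / 2 := by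
    have h2 := Real.isLittleO_log_id_atTop.bound (show (0:ℝ) < 1/(4*a) by positivity)
    filter_upwards [h2, Filter.eventually_ge_atTop (2:ℝ)] with t ht ht2
    have hlt : 0 ≤ Real.log t := Real.log_nonneg (by linarith)
    rw [Real.norm_eq_abs, Real.norm_eq_abs, abs_of_nonneg hlt, id_eq,
      abs_of_nonneg (by linarith : (0:ℝ) ≤ t)] at ht
    have : a * Real.log t ≤ t/4 := by
      have := mul_le_mul_of_nonneg_left ht ha.le
      calc a * Real.log t ≤ a * (1/(4*a) * t) := this
        _ = t/4 := by field_simp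
    linarith
  have hevN : ∀ᶠ n : ℕ in Filter.atTop, a * Real.log n ≤ ((n:ℝ) - 1) / 2 :=
    tendsto_natCast_atTop_atTop.eventually hev
  obtain ⟨N0, hN0⟩ := Filter.eventually_atTop.mp hevN
  set N := max N0 (max n₀ 3) with hNdef
  have hN3 : 3 ≤ N := le_trans (le_max_right n₀ 3) (le_max_right _ _)
  have hNn0 : n₀ ≤ N := le_trans (le_max_left n₀ 3) (le_max_right _ _)
  have hNcond : ∀ n : ℕ, N ≤ n → a * Real.log n ≤ ((n:ℝ) - 1) / 2 :=
    fun n hn => hN0 n (le_trans (le_max_left _ _) hn)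
  -- log n ≥ 1 for n ≥ 3
  have hlog1 : ∀ n : ℕ, 3 ≤ n → 1 ≤ Real.log n := by
    intro n hn
    have hnR : (3:ℝ) ≤ (n:ℝ) := by exact_mod_cast hn
    rw [Real.le_log_iff_exp_le (by linarith)]
    calc Real.exp 1 ≤ 2.7182818286 := Real.exp_one_lt_d9.le
      _ ≤ 3 := by norm_num
      _ ≤ (n:ℝ) := hnR
  have hDpos : 0 < Real.log N ^ (γ+1) * (N:ℝ) ^ (a/2) := by
    have h1 : 0 < Real.log N := lt_of_lt_of_le one_pos (hlog1 N hN3)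
    have h2 : (0:ℝ) < N := by positivity
    exact mul_pos (Real.rpow_pos_of_pos h1 _) (Real.rpow_pos_of_pos h2 _)
  set K := max (4*C) (x N / (Real.log N ^ (γ+1) * (N:ℝ) ^ (a/2)) + 1) with hKdef
  have hK0 : 0 < K := lt_of_lt_of_le (by positivity) (le_max_left _ _)
  have hKC : 4*C ≤ K := le_max_left _ _
  have main : ∀ n, N ≤ n → x n ≤ K * Real.log n ^ (γ+1) * (n:ℝ) ^ (a/2) := by
    intro n hn
    induction n, hn using Nat.le_induction with
    | base =>
      have hK2 : x N / (Real.log N ^ (γ+1) * (N:ℝ) ^ (a/2)) + 1 ≤ K := le_max_right _ _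
      have := mul_le_mul_of_nonneg_right hK2 hDpos.le
      rw [add_mul, div_mul_cancel₀ _ hDpos.ne', one_mul] at this
      calc x N ≤ x N + Real.log N ^ (γ+1) * (N:ℝ) ^ (a/2) := by linarith
        _ ≤ K * (Real.log N ^ (γ+1) * (N:ℝ) ^ (a/2)) := this
        _ = K * Real.log N ^ (γ+1) * (N:ℝ) ^ (a/2) := by ring
    | succ n hn ih =>
      have hn3 : 3 ≤ n := le_trans hN3 hn
      have hnR : (3:ℝ) ≤ (n:ℝ) := by exact_mod_cast hn3
      have hn0R : (0:ℝ) < (n:ℝ) := by linarith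
      have hn1R : (0:ℝ) < (n:ℝ) + 1 := by linarith
      set nn := (n:ℝ) with hnn
      set L := Real.log n with hL
      set L' := Real.log (nn+1) with hL'
      set u := 1/(nn+1) with hu
      have hu0 : 0 < u := by positivity
      have hL1 : 1 ≤ L := hlog1 n hn3
      have hL0 : 0 < L := lt_of_lt_of_le one_pos hL1
      -- L + u ≤ L'
      have hLL' : L + u ≤ L' := by
        have h := Real.log_le_sub_one_of_pos (show 0 < nn/(nn+1) by positivity)
        rw [Real.log_div (by linarith) (by linarith)] at h
        have he : nn/(nn+1) - 1 = -(1/(nn+1)) := by field_simp; ring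
        rw [he] at h
        rw [hL', hu]
        linarith
      have hL'0 : 0 < L' := by linarith
      set p := a/2 with hp
      have hp0 : 0 < p := by positivity
      set np := nn ^ p with hnp
      have hnp0 : 0 < np := Real.rpow_pos_of_pos hn0R p
      set G := L ^ γ with hG
      have hG0 : 0 ≤ G := Real.rpow_nonneg hL0.le γ
      -- fact A : (L+u) * G ≤ L'^(γ+1)
      have hA : (L + u) * G ≤ L' ^ (γ+1) := by
        rw [Real.rpow_add_one hL'0.ne' γ]
        have h1 : G ≤ L' ^ γ := Real.rpow_le_rpow hL0.le (by linarith) hγ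
        calc (L + u) * G ≤ L' * (L' ^ γ) :=
              mul_le_mul (by linarith) h1 hG0 hL'0.le
          _ = L' ^ γ * L' := by ring
      -- fact B : (1 + p*u) * np ≤ (nn+1)^p
      have hB : (1 + p*u) * np ≤ (nn+1) ^ p := by
        have hsplit : nn + 1 = nn * ((nn+1)/nn) := by field_simp
        rw [hsplit, Real.mul_rpow hn0R.le (by positivity)]
        have h1 : 1 + p*u ≤ ((nn+1)/nn) ^ p := by
          rw [Real.rpow_def_of_pos (by positivity), Real.log_div (by linarith) (by linarith)]
          have h2 : p*u + 1 ≤ Real.exp (p*u) := Real.add_one_le_exp _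
          have h3 : Real.exp (p*u) ≤ Real.exp ((Real.log (nn+1) - Real.log nn) * p) := by
            apply Real.exp_le_exp.mpr
            have : u ≤ Real.log (nn+1) - Real.log nn := by
              rw [← hL']
              have : Real.log nn = L := by rw [hL, hnn]
              rw [this]; linarith
            nlinarith
          linarith
        calc (1 + p*u) * np ≤ ((nn+1)/nn) ^ p * np :=
              mul_le_mul_of_nonneg_right h1 hnp0.le
          _ = nn ^ p * ((nn+1)/nn) ^ p := by rw [hnp]; ring
      -- scalar inequality
      have haL : a * L ≤ (nn - 1)/2 := hNcond n hn
      have hscal : (1 + a/(2*nn-2)) * (K*L) + C/nn ≤ K * (L+u) * (1+p*u) := by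
        rw [hu, hp]
        have h2n : (0:ℝ) < 2*nn - 2 := by linarith
        have hP : 0 ≤ K*(2*nn*(nn+1))*((nn-1)/2 - a*L)
            + (K-4*C)*((nn-1)*nn*(nn+1+a)) + 2*C*((nn-1)*(nn^2+2*a*nn-1)) := by
          have h1 : 0 ≤ K*(2*nn*(nn+1))*((nn-1)/2 - a*L) :=
            mul_nonneg (by positivity) (by linarith)
          have h2 : 0 ≤ (K-4*C)*((nn-1)*nn*(nn+1+a)) :=
            mul_nonneg (by linarith)
              (mul_nonneg (mul_nonneg (by linarith) hn0R.le) (by linarith))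
          have h3 : 0 ≤ 2*C*((nn-1)*(nn^2+2*a*nn-1)) :=
            mul_nonneg (by positivity) (mul_nonneg (by linarith) (by nlinarith))
          linarith
        have hexp : K * (L + 1/(nn+1)) * (1 + a/2 * (1/(nn+1)))
              - ((1 + a/(2*nn-2)) * (K*L) + C/nn)
            = (K*(2*nn*(nn+1))*((nn-1)/2 - a*L)
                + (K-4*C)*((nn-1)*nn*(nn+1+a)) + 2*C*((nn-1)*(nn^2+2*a*nn-1)))
              / ((2*nn-2)*nn*(nn+1)^2) := by
          have h2n' : 2*nn - 2 ≠ 0 := h2n.ne'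
          have hn1' : nn - 1 ≠ 0 := (by linarith : (0:ℝ) < nn - 1).ne'
          field_simp
          ring
        have h4 : (0:ℝ) ≤ K * (L + 1/(nn+1)) * (1 + a/2 * (1/(nn+1)))
            - ((1 + a/(2*nn-2)) * (K*L) + C/nn) := by
          rw [hexp]
          exact div_nonneg hP (le_of_lt (mul_pos (mul_pos h2n hn0R) (by positivity)))
        linarith
      -- assemble
      have hrecn := hrec n (le_trans hNn0 hn)
      have hd0 : (0:ℝ) ≤ 1 + a/(2*nn-2) := by
        have : (0:ℝ) < 2*nn-2 := by linarith
        positivity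
      have ihbd : (1 + a/(2*nn-2)) * x n ≤ (1 + a/(2*nn-2)) * (K * (G*L) * np) := by
        apply mul_le_mul_of_nonneg_left _ hd0
        calc x n ≤ K * L ^ (γ+1) * nn ^ p := ih
          _ = K * (G*L) * np := by
            rw [Real.rpow_add_one hL0.ne' γ, hG, hnp]
      have hpow1 : nn ^ (p - 1) = np / nn := by
        rw [Real.rpow_sub_one hn0R.ne', hnp]
      have hmid : (1 + a/(2*nn-2)) * (K * (G*L) * np) + C * G * (np/nn)
          ≤ K * ((L+u)*G) * ((1+p*u)*np) := by
        have h := mul_le_mul_of_nonneg_right hscal (show (0:ℝ) ≤ G*np by positivity)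
        calc (1 + a/(2*nn-2)) * (K * (G*L) * np) + C * G * (np/nn)
            = ((1 + a/(2*nn-2)) * (K*L) + C/nn) * (G*np) := by ring
          _ ≤ (K * (L+u) * (1+p*u)) * (G*np) := h
          _ = K * ((L+u)*G) * ((1+p*u)*np) := by ring
      have hfin : K * ((L+u)*G) * ((1+p*u)*np) ≤ K * L' ^ (γ+1) * (nn+1) ^ p := by
        have h1 : 0 ≤ (L+u)*G := mul_nonneg (by linarith) hG0
        have h2 : 0 ≤ (1+p*u)*np := by positivity
        calc K * ((L+u)*G) * ((1+p*u)*np)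
            ≤ K * (L' ^ (γ+1)) * ((1+p*u)*np) := by
              apply mul_le_mul_of_nonneg_right _ h2
              exact mul_le_mul_of_nonneg_left hA hK0.le
          _ ≤ K * (L' ^ (γ+1)) * ((nn+1) ^ p) := by
              apply mul_le_mul_of_nonneg_left hB
              have : 0 ≤ L' ^ (γ+1) := Real.rpow_nonneg hL'0.le _
              positivity
      have hcast : ((n+1:ℕ):ℝ) = nn + 1 := by push_cast [hnn]; ring
      calc x (n+1) ≤ (1 + a/(2*nn-2)) * x n + C * L ^ γ * nn ^ (p-1) := hrecn
        _ = (1 + a/(2*nn-2)) * x n + C * G * (np/nn) := by rw [hpow1, hG]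
        _ ≤ (1 + a/(2*nn-2)) * (K * (G*L) * np) + C * G * (np/nn) := by linarith
        _ ≤ K * ((L+u)*G) * ((1+p*u)*np) := hmid
        _ ≤ K * L' ^ (γ+1) * (nn+1) ^ p := hfin
        _ = K * Real.log ((n+1:ℕ):ℝ) ^ (γ+1) * (((n+1:ℕ)):ℝ) ^ p := by rw [hcast, hL']
  refine ⟨K, γ+1, hK0, ?_⟩
  filter_upwards [Filter.eventually_ge_atTop N] with n hn
  exact main n hn
end

section
/- Let S be a finite tree and let τ be the decorated tree whose underlying tree is S and whose label at each vertex u is ℓ(u) = deg_S(u). Then D_τ(S) > 0, and for every finite tree T with |T| = |S| that is not isomorphic to S, D_τ(T) = 0. Consequently, for every tree T with |T| = |S|, D_τ(T) = D_τ(S) · 1_{{T ≅ S}}. -/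
open Finset

noncomputable section

namespace LPAM

attribute [local instance] Classical.propDecidable

/-- The observable `D_{(σ,ℓ)}(T) = ∑_φ ∏_{u ∈ σ} [deg_T φ(u)]_{ℓ(u)}`, the sum running over all
embeddings (injective graph homomorphisms) `φ : σ → T`, for a tree `σ` decorated by the labels
`ℓ`. -/
def DvalR {k m : ℕ} (σ : SimpleGraph (Fin k)) (ℓ : Fin k → ℕ) (T : SimpleGraph (Fin m)) : ℝ :=
  ∑ φ : Fin k → Fin m,
    if Function.Injective φ ∧ ∀ a b, σ.Adj a b → T.Adj (φ a) (φ b) then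
      ∏ u, ((deg T (φ u)).descFactorial (ℓ u) : ℝ)
    else 0

lemma deg_map {m : ℕ} {S T : SimpleGraph (Fin m)} (ψ : S ≃g T) (v : Fin m) :
    deg T (ψ v) = deg S v := by
  unfold deg
  rw [← Nat.card_coe_set_eq, ← Nat.card_coe_set_eq]
  exact (Nat.card_congr (ψ.mapNeighborSet v)).symm

lemma embedding_iso {m : ℕ} {S T : SimpleGraph (Fin m)} (hS : S.IsTree) (hT : T.IsTree)
    {φ : Fin m → Fin m} (hinj : Function.Injective φ)
    (hadj : ∀ a b, S.Adj a b → T.Adj (φ a) (φ b)) : Nonempty (S ≃g T) := by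
  classical
  have hbij : Function.Bijective φ := Finite.injective_iff_bijective.mp hinj
  have hcard : S.edgeFinset.card = T.edgeFinset.card := by
    have h1 := hS.card_edgeFinset
    have h2 := hT.card_edgeFinset
    simp only [Fintype.card_fin] at h1 h2
    omega
  have hmapinj : Function.Injective (Sym2.map φ) := Sym2.map.injective hinj
  have himage : S.edgeFinset.image (Sym2.map φ) = T.edgeFinset := by
    apply Finset.eq_of_subset_of_card_le
    · intro e he
      obtain ⟨e', he', rfl⟩ := Finset.mem_image.mp he
      induction e' using Sym2.ind with
      | _ a b =>
        rw [SimpleGraph.mem_edgeFinset, SimpleGraph.mem_edgeSet] at he'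
        simpa [SimpleGraph.mem_edgeFinset] using hadj a b he'
    · rw [Finset.card_image_of_injective _ hmapinj, hcard]
  have hrev : ∀ a b, T.Adj (φ a) (φ b) → S.Adj a b := by
    intro a b hab
    have hmem : s(φ a, φ b) ∈ T.edgeFinset := by
      rw [SimpleGraph.mem_edgeFinset, SimpleGraph.mem_edgeSet]; exact hab
    rw [← himage] at hmem
    obtain ⟨e', he', heq⟩ := Finset.mem_image.mp hmem
    have he2 : e' = s(a, b) := hmapinj (by simpa using heq)
    subst he2
    rw [SimpleGraph.mem_edgeFinset, SimpleGraph.mem_edgeSet] at he'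
    exact he'
  exact ⟨⟨Equiv.ofBijective φ hbij, fun {a b} => ⟨hrev a b, hadj a b⟩⟩⟩

lemma DvalR_iso {k m : ℕ} (σ : SimpleGraph (Fin k)) (ℓ : Fin k → ℕ)
    {S T : SimpleGraph (Fin m)} (ψ : S ≃g T) : DvalR σ ℓ T = DvalR σ ℓ S := by
  unfold DvalR
  rw [← Equiv.sum_comp (Equiv.arrowCongr (Equiv.refl (Fin k)) ψ.toEquiv)]
  apply Finset.sum_congr rfl
  intro φ _
  have he : ∀ u, (Equiv.arrowCongr (Equiv.refl (Fin k)) ψ.toEquiv) φ u = ψ (φ u) := fun u => rfl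
  have h1 : Function.Injective ((Equiv.arrowCongr (Equiv.refl (Fin k)) ψ.toEquiv) φ) ↔
      Function.Injective φ := by
    constructor
    · intro h a b hab
      exact h (by simp only [he, hab])
    · intro h
      intro a b hab
      exact h (ψ.injective (by simpa [he] using hab))
  have h2 : (∀ a b, σ.Adj a b →
      T.Adj ((Equiv.arrowCongr (Equiv.refl (Fin k)) ψ.toEquiv) φ a)
        ((Equiv.arrowCongr (Equiv.refl (Fin k)) ψ.toEquiv) φ b)) ↔
      (∀ a b, σ.Adj a b → S.Adj (φ a) (φ b)) := by
    simp only [he, ψ.map_adj_iff]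
  exact if_congr (and_congr h1 h2)
    (Finset.prod_congr rfl fun u _ => by rw [he, deg_map ψ]) rfl

/-- Let `S` be a finite tree and let `τ` be the decorated tree whose underlying tree is `S` and
whose label at each vertex `u` is `ℓ(u) = deg_S(u)`. Then `D_τ(S) > 0`, for every tree `T` with
`|T| = |S|` not isomorphic to `S` one has `D_τ(T) = 0`, and consequently, for every tree `T`
with `|T| = |S|`, `D_τ(T) = D_τ(S) · 1_{T ≅ S}`. -/
theorem degree_decorated_tree_detects_seed
    {m : ℕ} (S : SimpleGraph (Fin m)) (hS : S.IsTree) :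
    0 < DvalR S (fun u => deg S u) S ∧
    (∀ T : SimpleGraph (Fin m), T.IsTree → ¬ Nonempty (S ≃g T) →
      DvalR S (fun u => deg S u) T = 0) ∧
    ∀ T : SimpleGraph (Fin m), T.IsTree →
      DvalR S (fun u => deg S u) T =
        DvalR S (fun u => deg S u) S * (if Nonempty (S ≃g T) then 1 else 0) := by
  have hpos : 0 < DvalR S (fun u => deg S u) S := by
    unfold DvalR
    apply Finset.sum_pos'
    · intro φ _
      split
      · exact Finset.prod_nonneg fun u _ => Nat.cast_nonneg _
      · exact le_refl _
    · refine ⟨id, Finset.mem_univ _, ?_⟩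
      rw [if_pos ⟨Function.injective_id, fun a b h => h⟩]
      apply Finset.prod_pos
      intro u _
      simp only [id_eq, Nat.descFactorial_self]
      exact_mod_cast Nat.factorial_pos _
  have hzero : ∀ T : SimpleGraph (Fin m), T.IsTree → ¬ Nonempty (S ≃g T) →
      DvalR S (fun u => deg S u) T = 0 := by
    intro T hT hniso
    unfold DvalR
    apply Finset.sum_eq_zero
    intro φ _
    rw [if_neg]
    rintro ⟨hinj, hadj⟩
    exact hniso (embedding_iso hS hT hinj hadj)
  refine ⟨hpos, hzero, ?_⟩
  intro T hT
  by_cases h : Nonempty (S ≃g T)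
  · obtain ⟨ψ⟩ := h
    rw [if_pos ⟨ψ⟩, mul_one, DvalR_iso _ _ ψ]
  · rw [if_neg h, mul_zero]
    exact hzero T hT h

end LPAM
end
end
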